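/- There is no holomorphic function f from the open half disk D = { z ∈ ℂ : 0 < |z| < 1 and 0 < Im z } to itself such that |f(z)| ≤ |z|² for all z ∈ D. That is, there is no function f : ℂ → ℂ which is differentiable (in the complex sense) on D, maps D into D, and satisfies |f(z)| ≤ |z|² on D. -/

import Mathlib

open Metric Complex

/-- If `f` is holomorphic on a ball and maps it into the upper half plane, then the modulus
of `f` at a point at distance at most `R/2` from the center is at least a third of the modulus
at the center. -/
lemma abs_center_le_three_mul {f : ℂ → ℂ} {c : ℂ} {R : ℝ} (hR : 0 < R)
    (hd : DifferentiableOn ℂ f (ball c R))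
    (him : ∀ z ∈ ball c R, 0 < (f z).im)
    {w : ℂ} (hw : dist w c ≤ R / 2) :
    ‖f c‖ ≤ 3 * ‖f w‖ := by
  have hwball : w ∈ ball c R := by
    rw [mem_ball]; linarith
  set a := f c with ha
  have haim : 0 < a.im := him c (mem_ball_self hR)
  -- key strict inequality: |u - a| < |u - conj a| for u in upper half plane
  have key : ∀ u : ℂ, 0 < u.im → ‖u - a‖ < ‖u - (starRingEnd ℂ) a‖ := by
    intro u hu
    apply lt_of_pow_lt_pow_left₀ 2 (norm_nonneg _)
    rw [Complex.sq_norm, Complex.sq_norm, Complex.normSq_apply, Complex.normSq_apply]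
    simp only [Complex.sub_re, Complex.sub_im, Complex.conj_re, Complex.conj_im]
    nlinarith [hu, haim]
  have hden : ∀ z ∈ ball c R, f z - (starRingEnd ℂ) a ≠ 0 := by
    intro z hz h
    have h0 : (0:ℝ) < ‖f z - (starRingEnd ℂ) a‖ :=
      lt_of_le_of_lt (norm_nonneg _) (key (f z) (him z hz))
    rw [h] at h0; simp at h0
  set h : ℂ → ℂ := fun z => (f z - a) / (f z - (starRingEnd ℂ) a) with hh
  have hhc : h c = 0 := by simp [hh, ha]
  have hhd : DifferentiableOn ℂ h (ball c R) := by
    apply DifferentiableOn.div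
    · exact hd.sub (differentiableOn_const _)
    · exact hd.sub (differentiableOn_const _)
    · exact hden
  have hmaps : Set.MapsTo h (ball c R) (ball (h c) 1) := by
    intro z hz
    rw [hhc, mem_ball, dist_zero_right, hh]
    simp only [norm_div]
    rw [div_lt_one (lt_of_le_of_lt (norm_nonneg _) (key (f z) (him z hz)))]
    exact key (f z) (him z hz)
  have := Complex.dist_le_div_mul_dist_of_mapsTo_ball hhd (hmaps.mono_right ball_subset_closedBall) hwball
  rw [hhc, dist_zero_right] at this
  have h1 : ‖h w‖ ≤ 1 / 2 := by
    calc ‖h w‖ ≤ 1 / R * dist w c := this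
    _ ≤ 1 / R * (R / 2) := by
        apply mul_le_mul_of_nonneg_left hw
        positivity
    _ = 1 / 2 := by field_simp
  -- translate back
  have hdenpos : 0 < ‖f w - (starRingEnd ℂ) a‖ :=
    lt_of_le_of_lt (norm_nonneg _) (key (f w) (him w hwball))
  have h2 : ‖f w - a‖ ≤ 1 / 2 * ‖f w - (starRingEnd ℂ) a‖ := by
    have : ‖h w‖ = ‖f w - a‖ / ‖f w - (starRingEnd ℂ) a‖ := by
      simp [hh, map_div₀]
    rw [this] at h1
    rw [div_le_iff₀ hdenpos] at h1
    linarith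
  have h3 : ‖f w - (starRingEnd ℂ) a‖ ≤ ‖f w‖ + ‖a‖ := by
    calc ‖f w - (starRingEnd ℂ) a‖ ≤ ‖f w‖ + ‖(starRingEnd ℂ) a‖ :=
      norm_sub_le _ _
    _ = ‖f w‖ + ‖a‖ := by rw [Complex.norm_conj]
  have h4 : ‖a‖ ≤ ‖f w‖ + ‖f w - a‖ := by
    calc ‖a‖ = ‖f w - (f w - a)‖ := by ring_nf
    _ ≤ ‖f w‖ + ‖f w - a‖ := norm_sub_le _ _
  linarith

/-- Lemma 3.4.1 of the paper: there is no holomorphic function `f` from the open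
half disk `D = {z : 0 < |z| < 1, 0 < Im z}` to itself with `|f(z)| ≤ |z|²`. -/
theorem no_holomorphic_half_disk :
    ¬ ∃ f : ℂ → ℂ,
      (∀ z ∈ {z : ℂ | 0 < ‖z‖ ∧ ‖z‖ < 1 ∧ 0 < z.im},
        DifferentiableAt ℂ f z) ∧
      (∀ z ∈ {z : ℂ | 0 < ‖z‖ ∧ ‖z‖ < 1 ∧ 0 < z.im},
        f z ∈ {z : ℂ | 0 < ‖z‖ ∧ ‖z‖ < 1 ∧ 0 < z.im}) ∧
      (∀ z ∈ {z : ℂ | 0 < ‖z‖ ∧ ‖z‖ < 1 ∧ 0 < z.im},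
        ‖f z‖ ≤ (‖z‖) ^ 2) := by
  rintro ⟨f, hd, hmaps, hle⟩
  set D := {z : ℂ | 0 < ‖z‖ ∧ ‖z‖ < 1 ∧ 0 < z.im} with hD
  set z : ℕ → ℂ := fun n => Complex.I * ((1:ℂ)/2) ^ (n + 1) with hz
  set r : ℕ → ℝ := fun n => (1/2 : ℝ) ^ (n + 1) with hr
  have hrpos : ∀ n, 0 < r n := fun n => by positivity
  have habsz : ∀ n, ‖z n‖ = r n := by
    intro n
    simp [hz, hr, map_mul, map_pow, norm_I]
  have himz : ∀ n, (z n).im = r n := by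
    intro n
    have h1 : z n = Complex.I * ((((1/2:ℝ)) ^ (n+1) : ℝ) : ℂ) := by
      rw [hz]; push_cast; norm_num
    rw [h1, hr]
    simp only [Complex.mul_im, Complex.I_re, Complex.I_im, Complex.ofReal_re,
      Complex.ofReal_im, zero_mul, one_mul, mul_zero, zero_add, add_zero]
  -- balls are in D
  have hball : ∀ n, ball (z n) (r n) ⊆ D := by
    intro n x hx
    rw [mem_ball] at hx
    have him : 0 < x.im := by
      have h1 : |(x - z n).im| ≤ ‖x - z n‖ := Complex.abs_im_le_norm _
      have h2 : ‖x - z n‖ < r n := by rwa [Complex.dist_eq] at hx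
      have h3 : x.im = (x - z n).im + r n := by
        rw [Complex.sub_im, himz n]; ring
      have := abs_le.mp h1
      linarith [this.1]
    refine ⟨?_, ?_, him⟩
    · rw [norm_pos_iff]
      intro h0
      rw [h0] at him; simp at him
    · have h2 : ‖x - z n‖ < r n := by rwa [Complex.dist_eq] at hx
      have : ‖x‖ ≤ ‖x - z n‖ + ‖z n‖ := by
        calc ‖x‖ = ‖(x - z n) + z n‖ := by ring_nf
        _ ≤ _ := norm_add_le _ _
      rw [habsz n] at this
      have hrn : r n ≤ 1/2 := by
        rw [hr]
        calc (1/2:ℝ)^(n+1) ≤ (1/2:ℝ)^1 := by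
              apply pow_le_pow_of_le_one <;> norm_num
        _ = 1/2 := pow_one _
      linarith
  have hdist : ∀ n, dist (z (n+1)) (z n) = r n / 2 := by
    intro n
    rw [Complex.dist_eq]
    have h1 : z (n+1) - z n = -(Complex.I * ((1:ℂ)/2)^(n+2)) := by
      rw [hz]
      show Complex.I * ((1:ℂ)/2) ^ (n+1+1) - Complex.I * ((1:ℂ)/2) ^ (n+1) = _
      rw [pow_succ ((1:ℂ)/2) (n+1)]
      ring
    rw [h1, norm_neg, norm_mul, Complex.norm_I, one_mul, norm_pow]
    have h2 : ‖(1:ℂ)/2‖ = 1/2 := by simp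
    rw [h2, hr]
    show (1/2:ℝ) ^ (n+1+1) = (1/2:ℝ)^(n+1) / 2
    rw [pow_succ]
    ring
  -- the step inequality
  have hstep : ∀ n, ‖f (z n)‖ ≤ 3 * ‖f (z (n+1))‖ := by
    intro n
    apply abs_center_le_three_mul (hrpos n)
    · intro x hx
      exact (hd x (hball n hx)).differentiableWithinAt
    · intro x hx
      exact (hmaps x (hball n hx)).2.2
    · rw [hdist n]
  -- iterate
  have hiter : ∀ n, ‖f (z 0)‖ ≤ 3 ^ n * ‖f (z n)‖ := by
    intro n
    induction n with
    | zero => simp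
    | succ n ih =>
      calc ‖f (z 0)‖ ≤ 3 ^ n * ‖f (z n)‖ := ih
      _ ≤ 3 ^ n * (3 * ‖f (z (n+1))‖) := by
          apply mul_le_mul_of_nonneg_left (hstep n); positivity
      _ = 3 ^ (n+1) * ‖f (z (n+1))‖ := by ring
  have hzmem : ∀ n, z n ∈ D := fun n => hball n (mem_ball_self (hrpos n))
  have hbound : ∀ n, ‖f (z 0)‖ ≤ (3/4 : ℝ) ^ n / 4 := by
    intro n
    calc ‖f (z 0)‖ ≤ 3 ^ n * ‖f (z n)‖ := hiter n
    _ ≤ 3 ^ n * (‖z n‖) ^ 2 := by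
        apply mul_le_mul_of_nonneg_left (hle (z n) (hzmem n)); positivity
    _ = 3 ^ n * ((1/2:ℝ)^(n+1))^2 := by rw [habsz n, hr]
    _ = (3/4:ℝ)^n / 4 := by
        have key4 : ((1/2:ℝ)^(n+1))^2 = (1/4:ℝ)^n * (1/4) := by
          rw [← pow_mul, show (n+1)*2 = 2*n + 2 from by ring, pow_add, pow_mul]
          norm_num
        have key5 : (3:ℝ)^n * ((1/4:ℝ)^n) = (3/4:ℝ)^n := by
          rw [← mul_pow]; norm_num
        rw [key4, ← mul_assoc, key5]
        ring
  have hpos : 0 < ‖f (z 0)‖ := (hmaps (z 0) (hzmem 0)).1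
  obtain ⟨n, hn⟩ := exists_pow_lt_of_lt_one hpos (by norm_num : (3/4:ℝ) < 1)
  have := hbound n
  have h4 : (3/4:ℝ)^n / 4 < (3/4:ℝ)^n := by
    have : (0:ℝ) < (3/4:ℝ)^n := by positivity
    linarith
  linarith
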